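/- Let f be a homeomorphism of a compact metric space having the POTP through a set K (for every ε>0 there is δ>0 such that every δ-pseudo-orbit with ξ_0 ∈ K can be ε-shadowed). Then for every ε>0 there is δ>0 such that every δ-pseudo-orbit with ξ_0 in the closed δ-neighborhood B[K,δ] of K can be ε-shadowed. -/
import Mathlib


open Metric Set

/-- Natural iterates of a homeomorphism. -/
def hnpow {X : Type*} [TopologicalSpace X] (f : X ≃ₜ X) : ℕ → X ≃ₜ X
  | 0 => Homeomorph.refl X
  | n+1 => (hnpow f n).trans f

/-- Integer iterates `fⁿ`, `n ∈ ℤ`, of a homeomorphism. -/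
def hpow {X : Type*} [TopologicalSpace X] (f : X ≃ₜ X) : ℤ → X ≃ₜ X
  | Int.ofNat n => hnpow f n
  | Int.negSucc n => hnpow f.symm (n+1)

variable {X : Type*} [MetricSpace X]

/-- `ξ` is a `δ`-pseudo-orbit of `f`. -/
def IsPseudoOrbit (f : X ≃ₜ X) (δ : ℝ) (ξ : ℤ → X) : Prop :=
  ∀ n : ℤ, dist (f (ξ n)) (ξ (n+1)) ≤ δ

/-- `ξ` is `ε`-shadowed by the orbit of `y`. -/
def ShadowedBy (f : X ≃ₜ X) (ε : ℝ) (y : X) (ξ : ℤ → X) : Prop :=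
  ∀ n : ℤ, dist (hpow f n y) (ξ n) ≤ ε

/-- `x` is a shadowable point of `f`. -/
def ShadowablePoint (f : X ≃ₜ X) (x : X) : Prop :=
  ∀ ε > 0, ∃ δ > 0, ∀ ξ : ℤ → X, IsPseudoOrbit f δ ξ → ξ 0 = x →
    ∃ y, ShadowedBy f ε y ξ

/-- `f` has the pseudo-orbit tracing property. -/
def POTP (f : X ≃ₜ X) : Prop :=
  ∀ ε > 0, ∃ δ > 0, ∀ ξ : ℤ → X, IsPseudoOrbit f δ ξ → ∃ y, ShadowedBy f ε y ξ

/-- `x` is a nonwandering point of `f`. -/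
def NonWandering (f : X ≃ₜ X) (x : X) : Prop :=
  ∀ U ∈ nhds x, ∃ k : ℕ, 0 < k ∧ ((hpow f (k : ℤ)) '' U ∩ U).Nonempty

/-- `x` is a chain recurrent point of `f`. -/
def ChainRecurrent (f : X ≃ₜ X) (x : X) : Prop :=
  ∀ ρ > 0, ∃ n : ℕ, 0 < n ∧ ∃ c : ℕ → X, c 0 = x ∧ c n = x ∧
    ∀ i < n, dist (f (c i)) (c (i+1)) ≤ ρ

/-- `f` is distal: `inf_{n∈ℤ} d(fⁿ x, fⁿ y) > 0` for all distinct `x, y`. -/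
def Distal (f : X ≃ₜ X) : Prop :=
  ∀ x y : X, x ≠ y → ∃ c > 0, ∀ n : ℤ, c ≤ dist (hpow f n x) (hpow f n y)

/-- `f` is minimal: every full orbit is dense. -/
def MinimalHomeo (f : X ≃ₜ X) : Prop :=
  ∀ x : X, Dense (Set.range fun n : ℤ => hpow f n x)

/-- `f` is equicontinuous (uniformly, over all integer iterates). -/
def EquicontinuousHomeo (f : X ≃ₜ X) : Prop :=
  ∀ α > 0, ∃ β > 0, ∀ x y : X, dist x y ≤ β → ∀ n : ℤ, dist (hpow f n x) (hpow f n y) ≤ α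

theorem stmt17 [CompactSpace X] (f : X ≃ₜ X) (K : Set X)
    (h : ∀ ε > 0, ∃ δ > 0, ∀ ξ : ℤ → X, IsPseudoOrbit f δ ξ → ξ 0 ∈ K →
      ∃ y, ShadowedBy f ε y ξ) :
    ∀ ε > 0, ∃ δ > 0, ∀ ξ : ℤ → X, IsPseudoOrbit f δ ξ →
      ξ 0 ∈ Metric.cthickening δ K → ∃ y, ShadowedBy f ε y ξ := by
  intro ε hε
  obtain ⟨δ, hδ, hshad⟩ := h (ε/2) (by linarith)
  have hf : UniformContinuous f := CompactSpace.uniformContinuous_of_continuous f.continuous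
  obtain ⟨η, hη, hfη⟩ := Metric.uniformContinuous_iff.mp hf (δ/2) (by linarith)
  refine ⟨min (η/3) (min (δ/3) (ε/4)), by positivity, ?_⟩
  set δ' := min (η/3) (min (δ/3) (ε/4)) with hδ'def
  have hδ'pos : 0 < δ' := by positivity
  have hδ'1 : δ' ≤ η/3 := min_le_left _ _
  have hδ'2 : δ' ≤ δ/3 := le_trans (min_le_right _ _) (min_le_left _ _)
  have hδ'3 : δ' ≤ ε/4 := le_trans (min_le_right _ _) (min_le_right _ _)
  intro ξ hpo hξ0
  obtain ⟨x, hxK, hdx⟩ : ∃ x ∈ K, dist (ξ 0) x < 2*δ' := by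
    have h1 : EMetric.infEdist (ξ 0) K < ENNReal.ofReal (2*δ') := by
      refine lt_of_le_of_lt hξ0 (ENNReal.ofReal_lt_ofReal_iff (by linarith) |>.mpr (by linarith))
    obtain ⟨x, hxK, hlt⟩ := EMetric.infEdist_lt_iff.mp h1
    exact ⟨x, hxK, by rwa [edist_dist, ENNReal.ofReal_lt_ofReal_iff (by linarith)] at hlt⟩
  set ξ' : ℤ → X := fun n => if n = 0 then x else ξ n with hξ'def
  have hξ'0 : ξ' 0 = x := rfl
  have hpo' : IsPseudoOrbit f δ ξ' := by
    intro n
    rcases eq_or_ne n 0 with rfl | hn0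
    · simp only [hξ'def, if_pos rfl, if_neg (by norm_num : (0:ℤ)+1 ≠ 0)]
      have h1 : dist (f x) (f (ξ 0)) < δ/2 := hfη (by rw [dist_comm]; linarith)
      calc dist (f x) (ξ (0+1)) ≤ dist (f x) (f (ξ 0)) + dist (f (ξ 0)) (ξ (0+1)) :=
            dist_triangle _ _ _
        _ ≤ δ/2 + δ' := add_le_add h1.le (hpo 0)
        _ ≤ δ := by linarith
    rcases eq_or_ne n (-1) with rfl | hn1
    · simp only [hξ'def, if_neg (by norm_num : (-1:ℤ) ≠ 0),
        if_pos (by norm_num : (-1:ℤ)+1 = 0)]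
      calc dist (f (ξ (-1))) x ≤ dist (f (ξ (-1))) (ξ 0) + dist (ξ 0) x := dist_triangle _ _ _
        _ ≤ δ' + 2*δ' := by have := hpo (-1); norm_num at this ⊢; linarith
        _ ≤ δ := by linarith
    · have hn1' : n + 1 ≠ 0 := by omega
      simp only [hξ'def, if_neg hn0, if_neg hn1']
      exact (hpo n).trans (by linarith)
  obtain ⟨y, hy⟩ := hshad ξ' hpo' (by rw [hξ'0]; exact hxK)
  refine ⟨y, fun n => ?_⟩
  rcases eq_or_ne n 0 with rfl | hn0
  · have h0 := hy 0
    rw [hξ'0] at h0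
    calc dist (hpow f 0 y) (ξ 0) ≤ dist (hpow f 0 y) x + dist x (ξ 0) := dist_triangle _ _ _
      _ ≤ ε/2 + 2*δ' := by rw [dist_comm x]; linarith
      _ ≤ ε := by linarith
  · have := hy n
    rw [hξ'def] at this
    simp only [if_neg hn0] at this
    linarith
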